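/- Let n ≥ 1, k ≥ 1, and let g_j : F_{2^n} → F_2 for 0 ≤ j ≤ k−1 be Boolean functions with g_j(0) = 0 for all j and Σ_{t ∈ F_{2^n}} ζ^{Σ_{j=0}^{k−1} 2^j g_j(t)} = 0, where ζ = e^{2πi/2^k}. Then the function f : F_{2^n} × F_{2^n} → Z_{2^k} given by f(y′, y) = Σ_{j=0}^{k−1} 2^j g_j(y′/y) (with the convention y′/y = 0 if y = 0) is gbent with respect to the inner product ⟨(a,b),(y′,y)⟩ = Tr(a y′ + b y), and its dual is f*(y′, y) = Σ_{j=0}^{k−1} 2^j g_j(y/y′). -/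

import Mathlib

open scoped BigOperators

/-- `zeta q = e^{2πi/q}`, a primitive `q`-th root of unity. -/
noncomputable def zeta (q : ℕ) : ℂ := Complex.exp (2 * Real.pi * Complex.I / (q : ℂ))

noncomputable instance (n : ℕ) : Fintype (GaloisField 2 n) := Fintype.ofFinite _

/-- The generalized Walsh-Hadamard transform on `F_{2^n} × F_{2^n}` with respect to the
inner product `⟨(a,b),(y′,y)⟩ = Tr(a y′ + b y)`. -/
noncomputable def gwht2 (n q : ℕ) (f : GaloisField 2 n × GaloisField 2 n → ZMod q)
    (u : GaloisField 2 n × GaloisField 2 n) : ℂ :=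
  ∑ v : GaloisField 2 n × GaloisField 2 n, zeta q ^ (f v).val *
    (-1 : ℂ) ^ (Algebra.trace (ZMod 2) (GaloisField 2 n) (u.1 * v.1 + u.2 * v.2)).val

lemma zeta_pow_self (q : ℕ) (hq : q ≠ 0) : zeta q ^ q = 1 := by
  have hqc : (q : ℂ) ≠ 0 := Nat.cast_ne_zero.mpr hq
  rw [zeta, ← Complex.exp_nat_mul]
  rw [show (q : ℂ) * (2 * Real.pi * Complex.I / (q : ℂ)) = 2 * Real.pi * Complex.I by
    rw [← mul_div_assoc]; exact mul_div_cancel_left₀ _ hqc]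
  exact Complex.exp_two_pi_mul_I

lemma zeta_pow_val (q : ℕ) (hq : q ≠ 0) (N : ℕ) :
    zeta q ^ ((N : ZMod q)).val = zeta q ^ N := by
  haveI : NeZero q := ⟨hq⟩
  conv_rhs => rw [← Nat.div_add_mod N q]
  rw [pow_add, pow_mul, zeta_pow_self q hq, one_pow, one_mul, ZMod.val_natCast]

lemma abs_zeta (q : ℕ) : ‖zeta q‖ = 1 := by
  rw [zeta, show 2 * Real.pi * Complex.I / (q : ℂ)
      = ((2 * Real.pi / (q : ℝ) : ℝ) : ℂ) * Complex.I by push_cast; ring]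
  exact Complex.norm_exp_ofReal_mul_I _

lemma neg_one_pow_add (x y : ZMod 2) :
    (-1 : ℂ) ^ ((x + y : ZMod 2)).val = (-1 : ℂ) ^ x.val * (-1 : ℂ) ^ y.val := by
  rcases (by decide : ∀ z : ZMod 2, z = 0 ∨ z = 1) x with rfl | rfl <;>
    rcases (by decide : ∀ z : ZMod 2, z = 0 ∨ z = 1) y with rfl | rfl <;>
    simp [ZMod.val_one, show (1 + 1 : ZMod 2) = 0 from rfl]

open scoped Classical in
lemma char_sum (n : ℕ) (hn : n ≠ 0) (c : GaloisField 2 n) :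
    ∑ y : GaloisField 2 n,
      (-1 : ℂ) ^ (Algebra.trace (ZMod 2) (GaloisField 2 n) (c * y)).val
    = if c = 0 then (2 ^ n : ℂ) else 0 := by
  classical
  split_ifs with hc
  · subst hc
    simp only [zero_mul, map_zero, ZMod.val_zero, pow_zero]
    rw [Finset.sum_const, nsmul_eq_mul, mul_one]
    have hcard : Fintype.card (GaloisField 2 n) = 2 ^ n := by
      rw [← Nat.card_eq_fintype_card, GaloisField.card 2 n hn]
    rw [Finset.card_univ, hcard]; push_cast; ring
  · have hnd := traceForm_nondegenerate (ZMod 2) (GaloisField 2 n)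
    have hne : ¬ (∀ y, Algebra.traceForm (ZMod 2) (GaloisField 2 n) c y = 0) := by
      intro h; exact hc (hnd.1 c h)
    push_neg at hne
    obtain ⟨t0, ht0⟩ := hne
    have ht1 : Algebra.trace (ZMod 2) (GaloisField 2 n) (c * t0) = 1 := by
      rw [Algebra.traceForm_apply] at ht0
      revert ht0
      generalize Algebra.trace (ZMod 2) (GaloisField 2 n) (c * t0) = z
      intro hz
      revert z; decide
    set S := ∑ y : GaloisField 2 n,
      (-1 : ℂ) ^ (Algebra.trace (ZMod 2) (GaloisField 2 n) (c * y)).val with hS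
    have key : S = -S := by
      conv_lhs => rw [hS,
        ← Equiv.sum_comp (Equiv.addRight t0) (fun y =>
          (-1 : ℂ) ^ (Algebra.trace (ZMod 2) (GaloisField 2 n) (c * y)).val)]
      rw [hS, ← Finset.sum_neg_distrib]
      apply Finset.sum_congr rfl
      intro y _
      simp only [Equiv.coe_addRight]
      rw [mul_add, map_add, ht1, neg_one_pow_add]
      rw [ZMod.val_one]; ring
    have : S = 0 := by linear_combination key / 2
    exact this

open scoped Classical in
theorem statement_6 (n k : ℕ) (hn : 1 ≤ n) (hk : 1 ≤ k)
    (g : ℕ → GaloisField 2 n → ZMod 2)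
    (hg0 : ∀ j < k, g j 0 = 0)
    (hsum : ∑ t : GaloisField 2 n,
      zeta (2 ^ k) ^ (∑ j ∈ Finset.range k, 2 ^ j * (g j t).val) = 0)
    (f : GaloisField 2 n × GaloisField 2 n → ZMod (2 ^ k))
    (hf : ∀ v, f v = ∑ j ∈ Finset.range k,
      (2 ^ j : ZMod (2 ^ k)) * ((g j (v.1 / v.2)).val : ZMod (2 ^ k))) :
    (∀ u, ‖gwht2 n (2 ^ k) f u‖ = 2 ^ n) ∧
    (∀ u, gwht2 n (2 ^ k) f u = (2 ^ n : ℂ) *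
      zeta (2 ^ k) ^ ((∑ j ∈ Finset.range k,
        (2 ^ j : ZMod (2 ^ k)) * ((g j (u.2 / u.1)).val : ZMod (2 ^ k))) : ZMod (2 ^ k)).val) := by
  classical
  have hq : (2 : ℕ) ^ k ≠ 0 := pow_ne_zero k (by norm_num)
  have hn0 : n ≠ 0 := by omega
  set φ : GaloisField 2 n → ℕ := fun t => ∑ j ∈ Finset.range k, 2 ^ j * (g j t).val with hφ
  have hsum' : ∑ t : GaloisField 2 n, zeta (2 ^ k) ^ φ t = 0 := hsum
  have hφ0 : φ 0 = 0 := by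
    apply Finset.sum_eq_zero
    intro j hj
    rw [hg0 j (Finset.mem_range.mp hj)]
    simp
  have hcast : ∀ t : GaloisField 2 n, ((∑ j ∈ Finset.range k,
      (2 ^ j : ZMod (2 ^ k)) * ((g j t).val : ZMod (2 ^ k))) : ZMod (2 ^ k))
      = ((φ t : ℕ) : ZMod (2 ^ k)) := by
    intro t
    rw [hφ]
    push_cast
    rfl
  have hzf : ∀ t : GaloisField 2 n, zeta (2 ^ k) ^ ((((φ t : ℕ) : ZMod (2 ^ k))).val) = zeta (2 ^ k) ^ φ t :=
    fun t => zeta_pow_val _ hq _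
  have hχ0 : (-1 : ℂ) ^ (Algebra.trace (ZMod 2) (GaloisField 2 n) 0).val = 1 := by
    simp
  -- the main computation
  have main : ∀ u : GaloisField 2 n × GaloisField 2 n, gwht2 n (2 ^ k) f u = (2 ^ n : ℂ) * zeta (2 ^ k) ^ φ (u.2 / u.1) := by
    rintro ⟨a, b⟩
    rw [gwht2]
    have hterm : ∀ v : GaloisField 2 n × GaloisField 2 n, zeta (2 ^ k) ^ (f v).val = zeta (2 ^ k) ^ φ (v.1 / v.2) := by
      intro v
      rw [hf v, hcast, hzf]
    simp only [hterm]
    rw [Fintype.sum_prod_type, Finset.sum_comm,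
      ← Finset.add_sum_erase (Finset.univ) _ (Finset.mem_univ (0 : GaloisField 2 n))]
    -- Part A : y = 0
    have partA : (∑ y' : GaloisField 2 n, zeta (2 ^ k) ^ φ (y' / 0) *
        (-1 : ℂ) ^ (Algebra.trace (ZMod 2) (GaloisField 2 n) (a * y' + b * 0)).val) = if a = 0 then (2 ^ n : ℂ) else 0 := by
      have h1 : ∀ y' : GaloisField 2 n, zeta (2 ^ k) ^ φ (y' / 0) *
          (-1 : ℂ) ^ (Algebra.trace (ZMod 2) (GaloisField 2 n) (a * y' + b * 0)).val = (-1 : ℂ) ^ (Algebra.trace (ZMod 2) (GaloisField 2 n) (a * y')).val := by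
        intro y'
        rw [div_zero, hφ0, pow_zero, one_mul, mul_zero, add_zero]
      simp only [h1]
      exact char_sum n hn0 a
    rw [partA]
    -- Part B : y ≠ 0, reindex y' = s * y
    have inner : ∀ y ∈ Finset.univ.erase (0 : GaloisField 2 n),
        (∑ y' : GaloisField 2 n, zeta (2 ^ k) ^ φ (y' / y) * (-1 : ℂ) ^ (Algebra.trace (ZMod 2) (GaloisField 2 n) (a * y' + b * y)).val)
        = ∑ s : GaloisField 2 n, zeta (2 ^ k) ^ φ s * (-1 : ℂ) ^ (Algebra.trace (ZMod 2) (GaloisField 2 n) ((a * s + b) * y)).val := by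
      intro y hy
      have hy0 : y ≠ 0 := Finset.ne_of_mem_erase hy
      rw [← Equiv.sum_comp (Equiv.mulRight₀ y hy0) (fun y' =>
        zeta (2 ^ k) ^ φ (y' / y) * (-1 : ℂ) ^ (Algebra.trace (ZMod 2) (GaloisField 2 n) (a * y' + b * y)).val)]
      apply Finset.sum_congr rfl
      intro s _
      simp only [Equiv.mulRight₀_apply]
      rw [mul_div_cancel_right₀ s hy0]
      congr 3
      ring
    rw [Finset.sum_congr rfl inner, Finset.sum_comm]
    -- inner sum over nonzero y
    have swap : ∀ s : GaloisField 2 n, (∑ y ∈ Finset.univ.erase (0 : GaloisField 2 n),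
        zeta (2 ^ k) ^ φ s * (-1 : ℂ) ^ (Algebra.trace (ZMod 2) (GaloisField 2 n) ((a * s + b) * y)).val)
        = zeta (2 ^ k) ^ φ s * ((if a * s + b = 0 then (2 ^ n : ℂ) else 0) - 1) := by
      intro s
      rw [← Finset.mul_sum]
      congr 1
      have hfull := char_sum n hn0 (a * s + b)
      rw [← Finset.add_sum_erase (Finset.univ) _ (Finset.mem_univ (0 : GaloisField 2 n)),
        mul_zero, hχ0] at hfull
      linear_combination hfull
    rw [Finset.sum_congr rfl (fun s _ => swap s)]
    have expand : ∑ s : GaloisField 2 n, zeta (2 ^ k) ^ φ s *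
        ((if a * s + b = 0 then (2 ^ n : ℂ) else 0) - 1)
        = (∑ s : GaloisField 2 n, zeta (2 ^ k) ^ φ s * (if a * s + b = 0 then (2 ^ n : ℂ) else 0))
          - ∑ s : GaloisField 2 n, zeta (2 ^ k) ^ φ s := by
      rw [← Finset.sum_sub_distrib]
      apply Finset.sum_congr rfl
      intro s _
      ring
    rw [expand, hsum', sub_zero]
    -- now case on a
    by_cases ha : a = 0
    · subst ha
      simp only [if_pos rfl, zero_mul, zero_add]
      have : ∑ s : GaloisField 2 n, zeta (2 ^ k) ^ φ s * (if b = 0 then (2 ^ n : ℂ) else 0)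
          = (∑ s : GaloisField 2 n, zeta (2 ^ k) ^ φ s) * (if b = 0 then (2 ^ n : ℂ) else 0) := by
        rw [Finset.sum_mul]
      rw [this, hsum', zero_mul, add_zero, div_zero, hφ0, pow_zero, mul_one]
      norm_num
    · rw [if_neg ha, zero_add]
      have hiff : ∀ s : GaloisField 2 n, (a * s + b = 0) ↔ (s = b / a) := by
        intro s
        rw [add_eq_zero_iff_eq_neg, CharTwo.neg_eq, mul_comm, ← eq_div_iff ha]
      have : ∀ s : GaloisField 2 n, zeta (2 ^ k) ^ φ s * (if a * s + b = 0 then (2 ^ n : ℂ) else 0)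
          = if s = b / a then zeta (2 ^ k) ^ φ s * (2 ^ n : ℂ) else 0 := by
        intro s
        by_cases h : s = b / a
        · rw [if_pos ((hiff s).mpr h), if_pos h]
        · rw [if_neg (fun hh => h ((hiff s).mp hh)), if_neg h, mul_zero]
      rw [Finset.sum_congr rfl (fun s _ => this s), Finset.sum_ite_eq' Finset.univ (b / a)]
      rw [if_pos (Finset.mem_univ _)]
      ring
  refine ⟨fun u => ?_, fun u => ?_⟩
  · rw [main u, norm_mul, norm_pow, norm_pow, abs_zeta, one_pow, mul_one]
    norm_num
  · rw [main u, hcast, hzf]
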